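/- Let p_1, …, p_h be points in ℝ^d with h ≥ 2, let R̂ > 0, and for each i with 1 ≤ i ≤ h let c_i and r_i be the center and radius of the minimum enclosing ball of {p_1, …, p_i}. If ‖p_{i+1} − c_i‖ > R̂ for every i with 1 ≤ i ≤ h−1, then r_h > (1 − 2/(h+1))·R̂. -/

import Mathlib

/-- `IsMEB P c r` says the closed ball of center `c` and radius `r` is the minimum enclosing
ball of `P`: it contains `P`, and any ball containing `P` has radius at least `r`. -/
def IsMEB {d : ℕ} (P : Set (EuclideanSpace ℝ (Fin d)))
    (c : EuclideanSpace ℝ (Fin d)) (r : ℝ) : Prop :=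
  (∀ p ∈ P, dist p c ≤ r) ∧
    ∀ (c' : EuclideanSpace ℝ (Fin d)) (r' : ℝ), (∀ p ∈ P, dist p c' ≤ r') → r ≤ r'

/-- Norm of a convex combination in an inner product space. -/
lemma coreset_combo_norm {d : ℕ} (θ : ℝ) (u v : EuclideanSpace ℝ (Fin d)) :
    ‖(1-θ)•u + θ•v‖^2 = (1-θ)*‖u‖^2 + θ*‖v‖^2 - θ*(1-θ)*‖u-v‖^2 := by
  have h1 := norm_add_sq_real ((1-θ)•u) (θ•v)
  have h2 := norm_sub_sq_real u v
  have h3 : (inner ℝ ((1-θ)•u) (θ•v) : ℝ) = (1-θ)*(θ*(inner ℝ u v : ℝ)) := by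
    rw [real_inner_smul_left, real_inner_smul_right]
  have h4 : ‖(1-θ)•u‖^2 = (1-θ)^2*‖u‖^2 := by
    rw [norm_smul]; simp [mul_pow, sq_abs]
  have h5 : ‖θ•v‖^2 = θ^2*‖v‖^2 := by
    rw [norm_smul]; simp [mul_pow, sq_abs]
  rw [h1, h3, h4, h5, h2]; ring

/-- Stability of the MEB: any ball covering `P` satisfies `r'^2 ≥ r^2 + dist c c'^2`. -/
lemma coreset_meb_stability {d : ℕ} {P : Set (EuclideanSpace ℝ (Fin d))} (hP : P.Nonempty)
    {c : EuclideanSpace ℝ (Fin d)} {r : ℝ} (hm : IsMEB P c r)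
    (c' : EuclideanSpace ℝ (Fin d)) (r' : ℝ)
    (hcov : ∀ p ∈ P, dist p c' ≤ r') : r^2 + dist c c'^2 ≤ r'^2 := by
  obtain ⟨q₀, hq₀⟩ := hP
  have hr0 : 0 ≤ r := le_trans dist_nonneg (hm.1 q₀ hq₀)
  have hr'0 : 0 ≤ r' := le_trans dist_nonneg (hcov q₀ hq₀)
  have main : ∀ θ : ℝ, 0 < θ → θ ≤ 1 → r^2 + (1-θ)*dist c c'^2 ≤ r'^2 := by
    intro θ hθ0 hθ1
    set δ := dist c c' with hδ
    set E : ℝ := (1-θ)*r^2 + θ*r'^2 - θ*(1-θ)*δ^2 with hE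
    set m := (1-θ)•c + θ•c' with hm'
    have hident : ∀ q : EuclideanSpace ℝ (Fin d),
        dist q m ^2 = (1-θ)*dist q c^2 + θ*dist q c'^2 - θ*(1-θ)*δ^2 := by
      intro q
      have hqm : q - m = (1-θ)•(q-c) + θ•(q-c') := by
        simp only [hm', smul_sub]; module
      have : (q-c) - (q-c') = c' - c := by abel
      rw [dist_eq_norm, hqm, coreset_combo_norm, this, ← dist_eq_norm, ← dist_eq_norm,
        ← dist_eq_norm, dist_comm c' c]
    have hEcov : ∀ q ∈ P, dist q m ≤ Real.sqrt E := by
      intro q hq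
      have h1 := hm.1 q hq
      have h2 := hcov q hq
      have hd1 : (0:ℝ) ≤ dist q c := dist_nonneg
      have hd2 : (0:ℝ) ≤ dist q c' := dist_nonneg
      have hsq : dist q m ^2 ≤ E := by
        rw [hident q, hE]
        nlinarith [pow_le_pow_left₀ hd1 h1 2, pow_le_pow_left₀ hd2 h2 2]
      calc dist q m = Real.sqrt (dist q m ^2) := (Real.sqrt_sq dist_nonneg).symm
        _ ≤ Real.sqrt E := Real.sqrt_le_sqrt hsq
    have hrE : r ≤ Real.sqrt E := hm.2 m _ hEcov
    have hE0 : 0 ≤ E := by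
      by_contra hneg
      push_neg at hneg
      have : Real.sqrt E = 0 := Real.sqrt_eq_zero_of_nonpos hneg.le
      have hq := hEcov q₀ hq₀
      rw [this] at hq
      have : dist q₀ m = 0 := le_antisymm hq dist_nonneg
      have h0 := hident q₀
      rw [this] at h0
      have h1 := hm.1 q₀ hq₀
      have h2 := hcov q₀ hq₀
      nlinarith [dist_nonneg (x := q₀) (y := c), dist_nonneg (x := q₀) (y := c'),
        pow_le_pow_left₀ (dist_nonneg (x := q₀) (y := c)) h1 2,
        pow_le_pow_left₀ (dist_nonneg (x := q₀) (y := c')) h2 2]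
    have hr2 : r^2 ≤ E := by
      have := Real.sq_sqrt hE0
      nlinarith [hrE]
    rw [hE] at hr2
    have : θ * (r^2 + (1-θ)*δ^2 - r'^2) ≤ 0 := by nlinarith
    nlinarith [hθ0]
  by_cases hδ0 : dist c c' = 0
  · have := main 1 one_pos le_rfl
    rw [hδ0] at this ⊢
    linarith
  · have hδpos : 0 < dist c c' ^2 := by positivity
    refine le_of_forall_pos_le_add fun ε hε => ?_
    rcases le_or_gt (dist c c' ^2) ε with hle | hlt
    · have := main 1 one_pos le_rfl
      linarith
    · have hθ0 : 0 < ε / dist c c' ^2 := by positivity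
      have hθ1 : ε / dist c c' ^2 ≤ 1 := by
        rw [div_le_one hδpos]; linarith
      have := main _ hθ0 hθ1
      have hmul : (ε / dist c c' ^2) * dist c c' ^2 = ε := div_mul_cancel₀ _ (ne_of_gt hδpos)
      nlinarith

lemma coreset_cast_eq (h : ℕ) (hp1 : (0:ℝ) < (h:ℝ)+1) :
    (1 - 2/((h:ℝ)+1)) = ((h:ℝ)-1)/((h:ℝ)+1) := by
  have hne : ((h:ℝ)+1) ≠ 0 := ne_of_gt hp1
  field_simp
  ring

/-- given points `p₁, …, p_h` with `h ≥ 2` and `R̂ > 0`, if `c_i, r_i` are the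
MEB center and radius of `{p₁, …, p_i}` for each `1 ≤ i ≤ h`, and `‖p_{i+1} − c_i‖ > R̂` for
every `1 ≤ i ≤ h − 1`, then `r_h > (1 − 2/(h+1))·R̂`. -/
theorem coreset_growth {d : ℕ} (h : ℕ) (hh : 2 ≤ h)
    (p : ℕ → EuclideanSpace ℝ (Fin d)) (R : ℝ) (hR : 0 < R)
    (c : ℕ → EuclideanSpace ℝ (Fin d)) (r : ℕ → ℝ)
    (hmeb : ∀ i : ℕ, 1 ≤ i → i ≤ h → IsMEB (p '' Set.Icc 1 i) (c i) (r i))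
    (hfar : ∀ i : ℕ, 1 ≤ i → i ≤ h - 1 → R < dist (p (i + 1)) (c i)) :
    (1 - 2 / ((h : ℝ) + 1)) * R < r h := by
  have hne : ∀ i : ℕ, 1 ≤ i → (p '' Set.Icc 1 i).Nonempty := fun i hi =>
    ⟨p i, ⟨i, ⟨hi, le_rfl⟩, rfl⟩⟩
  have hsub : ∀ i : ℕ, p '' Set.Icc 1 i ⊆ p '' Set.Icc 1 (i+1) :=
    fun i => Set.image_mono (f := p) (Set.Icc_subset_Icc le_rfl (Nat.le_succ i))
  have hr0 : ∀ i : ℕ, 1 ≤ i → i ≤ h → 0 ≤ r i := by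
    intro i h1 h2
    exact le_trans dist_nonneg ((hmeb i h1 h2).1 (p i) ⟨i, ⟨h1, le_rfl⟩, rfl⟩)
  have hmono : ∀ i : ℕ, 1 ≤ i → i + 1 ≤ h → r i ≤ r (i+1) := by
    intro i h1 h2
    exact (hmeb i h1 (by omega)).2 (c (i+1)) (r (i+1))
      (fun q hq => (hmeb (i+1) (by omega) h2).1 q (hsub i hq))
  have hstep : ∀ i : ℕ, 1 ≤ i → i + 1 ≤ h → r i ≤ R → r i ^2 + R^2 < 2*R*r (i+1) := by
    intro i h1 h2 hrR
    have M := hmeb i h1 (by omega)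
    have M' := hmeb (i+1) (by omega) h2
    have hcov : ∀ q ∈ p '' Set.Icc 1 i, dist q (c (i+1)) ≤ r (i+1) :=
      fun q hq => M'.1 q (hsub i hq)
    have hA := coreset_meb_stability (hne i h1) M (c (i+1)) (r (i+1)) hcov
    have hd : R < dist (p (i+1)) (c i) := hfar i h1 (by omega)
    have htri : dist (p (i+1)) (c i) ≤ dist (p (i+1)) (c (i+1)) + dist (c i) (c (i+1)) := by
      rw [dist_comm (c i) (c (i+1))]
      exact dist_triangle _ _ _
    have hpin : dist (p (i+1)) (c (i+1)) ≤ r (i+1) :=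
      M'.1 (p (i+1)) ⟨i+1, ⟨by omega, le_rfl⟩, rfl⟩
    set δ := dist (c i) (c (i+1))
    set t := r (i+1)
    have hδ0 : (0:ℝ) ≤ δ := dist_nonneg
    have hri0 : 0 ≤ r i := hr0 i h1 (by omega)
    have hδtri : dist (p (i+1)) (c i) ≤ t + δ := le_trans htri (by linarith)
    rcases le_or_gt (dist (p (i+1)) (c i)) t with hc | hc
    · nlinarith
    · have hdt : 0 < dist (p (i+1)) (c i) - t := by linarith
      have hδ2 : (dist (p (i+1)) (c i) - t)^2 ≤ δ^2 := by nlinarith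
      have h2dt : r i^2 + dist (p (i+1)) (c i)^2 ≤ 2*(dist (p (i+1)) (c i))*t := by nlinarith
      nlinarith [mul_pos (sub_pos.2 hd)
        (show (0:ℝ) < R*dist (p (i+1)) (c i) - r i^2 by nlinarith)]
  have claim : ∀ i : ℕ, 2 ≤ i → i ≤ h → ((i:ℝ)-1)/((i:ℝ)+1)*R < r i := by
    intro i hi2
    induction i, hi2 using Nat.le_induction with
    | base =>
      intro hle
      have hb : ((2:ℕ):ℝ) = 2 := by norm_num
      rw [hb]
      rcases le_or_gt (r 1) R with hc | hc
      · have := hstep 1 le_rfl (by omega) hc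
        have h10 := hr0 1 le_rfl (by omega)
        nlinarith
      · have := hmono 1 le_rfl (by omega)
        nlinarith
    | succ i hi ih =>
      intro hle
      have hih := ih (by omega)
      have hcast : ((i+1:ℕ):ℝ) = (i:ℝ)+1 := by push_cast; ring
      rw [hcast]
      have hi1 : (2:ℝ) ≤ (i:ℝ) := by exact_mod_cast hi
      have hp1 : (0:ℝ) < (i:ℝ)+1 := by linarith
      have hp2 : (0:ℝ) < (i:ℝ)+2 := by linarith
      have hgoal : ((i:ℝ)+1-1)/((i:ℝ)+1+1) = (i:ℝ)/((i:ℝ)+2) := by ring_nf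
      rw [hgoal]
      rcases le_or_gt (r i) R with hc | hc
      · have h2 := hstep i (by omega) hle hc
        have hri : 0 ≤ r i := hr0 i (by omega) (by omega)
        rw [div_mul_eq_mul_div, div_lt_iff₀ hp2]
        rw [div_mul_eq_mul_div, div_lt_iff₀ hp1] at hih
        have hb : (0:ℝ) ≤ ((i:ℝ)-1)*R := by nlinarith
        have hsq : (((i:ℝ)-1)*R)^2 ≤ (r i*((i:ℝ)+1))^2 := pow_le_pow_left₀ hb hih.le 2
        have key : ((i:ℝ)^2+1)*R < r (i+1)*((i:ℝ)+1)^2 := by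
          have h2' := mul_lt_mul_of_pos_right h2 (mul_pos hp1 hp1)
          nlinarith [mul_pos hR hp1]
        have := mul_lt_mul_of_pos_right key hp2
        nlinarith [mul_pos hp1 hp1, mul_pos hR hp2]
      · have hm := hmono i (by omega) hle
        have hlt1 : (i:ℝ)/((i:ℝ)+2) < 1 := by
          rw [div_lt_one hp2]; linarith
        nlinarith
  have hfinal := claim h hh le_rfl
  have hp1 : (0:ℝ) < (h:ℝ)+1 := by positivity
  have heq : (1 - 2 / ((h : ℝ) + 1)) = ((h:ℝ)-1)/((h:ℝ)+1) := coreset_cast_eq h hp1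
  rw [heq]
  exact hfinal
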